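/- π·cot(πx) = lim_{M→∞} Σ_{m=−M}^{M} 1/(x + m) for every x ∈ ℂ \ ℤ. -/

import Mathlib

open Real Complex Filter

noncomputable section CotPFSection

namespace CotPF

/-- The `j`-th factor of the Euler sine product. -/
def fct (j : ℕ) (z : ℂ) : ℂ := 1 - z ^ 2 / ((j : ℂ) + 1) ^ 2

/-- Partial Euler products for sine. -/
def F (n : ℕ) (z : ℂ) : ℂ := (π : ℂ) * z * ∏ j ∈ Finset.range n, fct j z

lemma cne (j : ℕ) : ((j : ℂ) + 1) ≠ 0 := by
  have h : ((j : ℂ) + 1) = ((j + 1 : ℕ) : ℂ) := by push_cast; ring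
  rw [h]
  exact Nat.cast_ne_zero.2 (Nat.succ_ne_zero j)

lemma fct_ne_zero {x : ℂ} (hx : ∀ m : ℤ, x ≠ (m : ℂ)) (j : ℕ) : fct j x ≠ 0 := by
  intro h
  have hfac : (x - ((j : ℂ) + 1)) * (x + ((j : ℂ) + 1)) = 0 := by
    have hc := cne j
    unfold fct at h
    field_simp at h
    linear_combination -h
  rcases mul_eq_zero.1 hfac with h1 | h1
  · exact hx ((j : ℤ) + 1) (by push_cast; linear_combination h1)
  · exact hx (-((j : ℤ) + 1)) (by push_cast; linear_combination h1)

lemma diff_fct (j : ℕ) : Differentiable ℂ (fct j) := by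
  unfold fct
  fun_prop

lemma hasDerivAt_fct (j : ℕ) (x : ℂ) :
    HasDerivAt (fct j) (-(2 * x / ((j : ℂ) + 1) ^ 2)) x := by
  have h : HasDerivAt (fun z : ℂ => z ^ 2) (2 * x) x := by
    simpa using hasDerivAt_pow 2 x
  unfold fct
  simpa [fct, div_eq_mul_inv] using (h.div_const (((j : ℂ) + 1) ^ 2)).const_sub 1

lemma sub_ne (x : ℂ) (hx : ∀ m : ℤ, x ≠ (m : ℂ)) (j : ℕ) : x - ((j : ℂ) + 1) ≠ 0 := by
  intro h
  exact hx ((j : ℤ) + 1) (by push_cast; linear_combination h)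

lemma add_ne (x : ℂ) (hx : ∀ m : ℤ, x ≠ (m : ℂ)) (j : ℕ) : x + ((j : ℂ) + 1) ≠ 0 := by
  intro h
  exact hx (-((j : ℤ) + 1)) (by push_cast; linear_combination h)

lemma logDeriv_fct_aux (c x : ℂ) (hc : c ≠ 0) (h1 : x - c ≠ 0) (h2 : x + c ≠ 0) :
    (-(2 * x / c ^ 2)) / (1 - x ^ 2 / c ^ 2) = 1 / (x - c) + 1 / (x + c) := by
  have h3 : 1 - x ^ 2 / c ^ 2 = -((x - c) * (x + c)) / c ^ 2 := by
    field_simp; ring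
  rw [h3]
  field_simp
  ring

lemma logDeriv_fct {x : ℂ} (hx : ∀ m : ℤ, x ≠ (m : ℂ)) (j : ℕ) :
    logDeriv (fct j) x = 1 / (x - ((j : ℂ) + 1)) + 1 / (x + ((j : ℂ) + 1)) := by
  rw [logDeriv_apply, (hasDerivAt_fct j x).deriv]
  rw [show fct j x = 1 - x ^ 2 / ((j : ℂ) + 1) ^ 2 from rfl]
  exact logDeriv_fct_aux _ _ (cne j) (sub_ne x hx j) (add_ne x hx j)

lemma logDeriv_F {x : ℂ} (hx : ∀ m : ℤ, x ≠ (m : ℂ)) (n : ℕ) :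
    logDeriv (F n) x = 1 / x + ∑ j ∈ Finset.range n,
      (1 / (x - ((j : ℂ) + 1)) + 1 / (x + ((j : ℂ) + 1))) := by
  have hx0 : x ≠ 0 := fun h => hx 0 (by simpa using h)
  have hprod_ne : (∏ j ∈ Finset.range n, fct j x) ≠ 0 :=
    Finset.prod_ne_zero_iff.2 fun j _ => fct_ne_zero hx j
  have hpi : ((π : ℂ)) ≠ 0 := by exact_mod_cast Real.pi_ne_zero
  have hFeq : F n = fun z => ((π : ℂ) * z) * (∏ j ∈ Finset.range n, fct j ·) z := rfl
  rw [hFeq, logDeriv_mul x (mul_ne_zero hpi hx0) hprod_ne (by fun_prop)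
      (DifferentiableAt.fun_finsetProd fun j _ => (diff_fct j).differentiableAt),
    logDeriv_const_mul x _ hpi, logDeriv_id',
    logDeriv_prod (fun j _ => fct_ne_zero hx j)
      (fun j _ => (diff_fct j).differentiableAt)]
  congr 1
  exact Finset.sum_congr rfl fun j _ => logDeriv_fct hx j

lemma sum_Icc_eq (x : ℂ) (n : ℕ) :
    ∑ m ∈ Finset.Icc (-(n : ℤ)) (n : ℤ), 1 / (x + (m : ℂ)) =
      1 / x + ∑ j ∈ Finset.range n, (1 / (x - ((j : ℂ) + 1)) + 1 / (x + ((j : ℂ) + 1))) := by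
  induction n with
  | zero => simp
  | succ n ih =>
    have h1 : Finset.Icc (-(n + 1 : ℤ)) (n + 1 : ℤ)
        = insert (-(n + 1 : ℤ)) (insert ((n + 1 : ℤ)) (Finset.Icc (-(n : ℤ)) (n : ℤ))) := by
      ext m
      simp only [Finset.mem_Icc, Finset.mem_insert]
      omega
    have h2 : ((n : ℤ) + 1 : ℤ) ∉ Finset.Icc (-(n : ℤ)) (n : ℤ) := by
      simp only [Finset.mem_Icc]; omega
    have h3 : (-(n + 1 : ℤ)) ∉ insert ((n + 1 : ℤ)) (Finset.Icc (-(n : ℤ)) (n : ℤ)) := by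
      simp only [Finset.mem_insert, Finset.mem_Icc]; omega
    push_cast
    rw [h1, Finset.sum_insert h3, Finset.sum_insert h2, ih, Finset.sum_range_succ]
    push_cast
    ring

lemma diff_F (n : ℕ) : Differentiable ℂ (F n) := by
  apply Differentiable.mul
  · fun_prop
  · exact Differentiable.fun_finsetProd fun j _ => by unfold fct; fun_prop

lemma norm_w_le {r : ℝ} (hr : 0 < r) (j : ℕ) {z : ℂ} (hz : z ∈ Metric.ball (0 : ℂ) r) :
    ‖z ^ 2 / ((j : ℂ) + 1) ^ 2‖ ≤ r ^ 2 / ((j : ℝ) + 1) ^ 2 := by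
  have hz' : ‖z‖ < r := by simpa using Metric.mem_ball.1 hz
  have hcn : ‖((j : ℂ) + 1)‖ = (j : ℝ) + 1 := by
    rw [show ((j : ℂ) + 1) = ((j + 1 : ℕ) : ℂ) by push_cast; ring]
    rw [Complex.norm_natCast]
    push_cast; ring
  rw [norm_div, norm_pow, norm_pow, hcn]
  gcongr

lemma half_bound {r : ℝ} (hr : 0 < r) {j : ℕ} (hj : ⌈2 * r ^ 2⌉₊ ≤ j) :
    r ^ 2 / ((j : ℝ) + 1) ^ 2 ≤ 1 / 2 := by
  have h1 : 2 * r ^ 2 ≤ (j : ℝ) := le_trans (Nat.le_ceil _) (by exact_mod_cast hj)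
  have hj0 : (0 : ℝ) ≤ (j : ℝ) := Nat.cast_nonneg j
  rw [div_le_div_iff₀ (by positivity) (by norm_num)]
  nlinarith [sq_nonneg ((j : ℝ) + 1), sq_nonneg r]

lemma fct_ne_zero_of_small {j : ℕ} {z : ℂ} (h : ‖z ^ 2 / ((j : ℂ) + 1) ^ 2‖ ≤ 1 / 2) :
    fct j z ≠ 0 := by
  intro h0
  have : ‖(1 : ℂ)‖ ≤ 1 / 2 := by
    have h1 : (1 : ℂ) = z ^ 2 / ((j : ℂ) + 1) ^ 2 := by
      have := h0
      unfold fct at this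
      linear_combination this
    rw [h1]; exact h
  norm_num at this

set_option maxHeartbeats 1000000 in
lemma tlu (r : ℝ) (hr : 0 < r) :
    TendstoLocallyUniformlyOn F (fun z => Complex.sin ((π : ℂ) * z)) atTop
      (Metric.ball (0 : ℂ) r) := by
  set s : Set ℂ := Metric.ball (0 : ℂ) r with hs
  set N : ℕ := ⌈2 * r ^ 2⌉₊ with hNdef
  set g : ℕ → ℂ → ℂ := fun j z => Complex.log (fct (N + j) z) with hgdef
  set u : ℕ → ℝ := fun j => 3 / 2 * (r ^ 2 / ((N + j : ℝ) + 1) ^ 2) with hudef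
  -- summability of the bound
  have hu : Summable u := by
    have h0 : Summable (fun n : ℕ => 1 / (n : ℝ) ^ 2) := by
      rw [summable_one_div_nat_pow]
      norm_num
    have h1 : Summable (fun j : ℕ => 1 / ((j + (N + 1) : ℕ) : ℝ) ^ 2) :=
      ((summable_nat_add_iff (N + 1)).2 h0)
    apply Summable.mul_left
    have h2 : Summable (fun j : ℕ => r ^ 2 * (1 / ((j + (N + 1) : ℕ) : ℝ) ^ 2)) :=
      h1.mul_left _
    apply h2.congr
    intro j
    push_cast
    field_simp
    ring
  -- uniform bound on the log terms
  have hfu : ∀ j : ℕ, ∀ z ∈ s, ‖g j z‖ ≤ u j := by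
    intro j z hz
    have hw := norm_w_le hr (N + j) hz
    have hhalf : ‖z ^ 2 / (((N + j : ℕ) : ℂ) + 1) ^ 2‖ ≤ 1 / 2 := by
      refine le_trans ?_ (half_bound hr (Nat.le_add_right N j))
      exact_mod_cast hw
    have hlog : ‖Complex.log (1 + -(z ^ 2 / (((N + j : ℕ) : ℂ) + 1) ^ 2))‖ ≤
        3 / 2 * ‖-(z ^ 2 / (((N + j : ℕ) : ℂ) + 1) ^ 2)‖ :=
      Complex.norm_log_one_add_half_le_self (by rwa [norm_neg])
    have heq : fct (N + j) z = 1 + -(z ^ 2 / (((N + j : ℕ) : ℂ) + 1) ^ 2) := by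
      unfold fct; push_cast; ring
    calc ‖g j z‖ = ‖Complex.log (1 + -(z ^ 2 / (((N + j : ℕ) : ℂ) + 1) ^ 2))‖ := by
          rw [hgdef]; simp only; rw [heq]
      _ ≤ 3 / 2 * ‖-(z ^ 2 / (((N + j : ℕ) : ℂ) + 1) ^ 2)‖ := hlog
      _ ≤ u j := by
          rw [norm_neg, hudef]
          have : ((N + j : ℕ) : ℝ) = (N + j : ℝ) := by push_cast; ring
          have hw' : ‖z ^ 2 / (((N + j : ℕ) : ℂ) + 1) ^ 2‖ ≤ r ^ 2 / ((N + j : ℝ) + 1) ^ 2 := by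
            rw [show (r ^ 2 / ((N + j : ℝ) + 1) ^ 2) = r ^ 2 / (((N + j : ℕ) : ℝ) + 1) ^ 2 by
              push_cast; ring]
            exact hw
          simp only
          nlinarith [norm_nonneg (z ^ 2 / (((N + j : ℕ) : ℂ) + 1) ^ 2)]
  -- uniform convergence of the log sums
  have hS : TendstoUniformlyOn (fun n z => ∑ j ∈ Finset.range n, g j z)
      (fun z => ∑' j, g j z) atTop s := tendstoUniformlyOn_tsum_nat hu hfu
  set M : ℝ := ∑' j, u j with hMdef
  have hM : ∀ z ∈ s, ‖∑' j, g j z‖ ≤ M :=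
    fun z hz => tsum_of_norm_bounded hu.hasSum (fun j => hfu j z hz)
  -- factorization of F for n ≥ N
  have hfctne : ∀ j : ℕ, ∀ z ∈ s, fct (N + j) z ≠ 0 := by
    intro j z hz
    apply fct_ne_zero_of_small
    refine le_trans (norm_w_le hr (N + j) hz) ?_
    exact_mod_cast half_bound hr (Nat.le_add_right N j)
  have hFeq : ∀ n : ℕ, N ≤ n → ∀ z ∈ s,
      F n z = F N z * Complex.exp (∑ j ∈ Finset.range (n - N), g j z) := by
    intro n hn z hz
    have hsplit : F n z = F N z * ∏ j ∈ Finset.range (n - N), fct (N + j) z := by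
      rw [F, F, show n = N + (n - N) by omega, Finset.prod_range_add]
      simp only [Nat.add_sub_cancel_left]
      ring
    rw [hsplit, Complex.exp_sum]
    congr 1
    exact Finset.prod_congr rfl fun j _ => (Complex.exp_log (hfctne j z hz)).symm
  set G : ℂ → ℂ := fun z => F N z * Complex.exp (∑' j, g j z) with hGdef
  have hTLU : TendstoLocallyUniformlyOn F G atTop s := by
    rw [tendstoLocallyUniformlyOn_iff_forall_isCompact Metric.isOpen_ball]
    intro K hKs hKc
    obtain ⟨C, hC⟩ := hKc.exists_bound_of_continuousOn (diff_F N).continuous.continuousOn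
    set C' : ℝ := max C 0 with hC'def
    have hC'0 : 0 ≤ C' := le_max_right _ _
    have hpos : 0 < (C' + 1) * Real.exp M * 2 := by positivity
    rw [Metric.tendstoUniformlyOn_iff]
    intro ε hε
    set δ : ℝ := min 1 (ε / ((C' + 1) * Real.exp M * 2)) with hδdef
    have hδ0 : 0 < δ := lt_min one_pos (div_pos hε hpos)
    have hev := Metric.tendstoUniformlyOn_iff.1 hS δ hδ0
    rw [eventually_atTop] at hev ⊢
    obtain ⟨m₀, hm₀⟩ := hev
    refine ⟨N + m₀, fun n hn z hzK => ?_⟩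
    have hzs : z ∈ s := hKs hzK
    have hnN : N ≤ n := le_trans (Nat.le_add_right _ _) hn
    have hd : dist (∑' j, g j z) (∑ j ∈ Finset.range (n - N), g j z) < δ :=
      hm₀ (n - N) (by omega) z hzs
    rw [hFeq n hnN z hzs]
    set T : ℂ := ∑ j ∈ Finset.range (n - N), g j z with hTdef
    set Sz : ℂ := ∑' j, g j z with hSzdef
    have hexp : Complex.exp Sz - Complex.exp T
        = Complex.exp Sz * (1 - Complex.exp (T - Sz)) := by
      rw [mul_sub, mul_one, ← Complex.exp_add]
      ring_nf
    have hTSz : ‖T - Sz‖ < δ := by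
      rw [← dist_eq_norm, dist_comm]
      exact hd
    have hTSz1 : ‖T - Sz‖ ≤ 1 := le_of_lt (lt_of_lt_of_le hTSz (min_le_left _ _))
    have h1 : ‖1 - Complex.exp (T - Sz)‖ ≤ 2 * ‖T - Sz‖ := by
      rw [← norm_neg, neg_sub]
      exact_mod_cast Complex.norm_exp_sub_one_le (by exact_mod_cast hTSz1)
    have h2 : ‖Complex.exp Sz‖ ≤ Real.exp M := by
      rw [Complex.norm_exp]
      exact Real.exp_le_exp.2 (le_trans (Complex.re_le_norm Sz) (hM z hzs))
    have h3 : ‖F N z‖ ≤ C' := le_trans (hC z hzK) (le_max_left _ _)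
    have key : dist (G z) (F N z * Complex.exp T) ≤ (C' + 1) * Real.exp M * 2 * ‖T - Sz‖ := by
      rw [hGdef, dist_eq_norm]
      simp only
      rw [← mul_sub, norm_mul, hexp, norm_mul]
      calc ‖F N z‖ * (‖Complex.exp Sz‖ * ‖1 - Complex.exp (T - Sz)‖)
          ≤ C' * (Real.exp M * (2 * ‖T - Sz‖)) := by
            apply mul_le_mul h3 _ (by positivity) hC'0
            apply mul_le_mul h2 h1 (norm_nonneg _) (Real.exp_nonneg _)
        _ ≤ (C' + 1) * Real.exp M * 2 * ‖T - Sz‖ := by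
            nlinarith [norm_nonneg (T - Sz), Real.exp_nonneg M]
    calc dist (G z) (F N z * Complex.exp T)
        ≤ (C' + 1) * Real.exp M * 2 * ‖T - Sz‖ := key
      _ < (C' + 1) * Real.exp M * 2 * δ := by
          exact mul_lt_mul_of_pos_left hTSz hpos
      _ ≤ (C' + 1) * Real.exp M * 2 * (ε / ((C' + 1) * Real.exp M * 2)) := by
          exact mul_le_mul_of_nonneg_left (min_le_right _ _) (le_of_lt hpos)
      _ = ε := by field_simp
  -- identify the limit with sine
  have hGsin : Set.EqOn G (fun z => Complex.sin ((π : ℂ) * z)) s := by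
    intro z hz
    have h1 : Tendsto (fun n => F n z) atTop (nhds (G z)) := hTLU.tendsto_at hz
    have h2 : Tendsto (fun n => F n z) atTop (nhds (Complex.sin ((π : ℂ) * z))) := by
      have := Complex.tendsto_euler_sin_prod z
      simpa [F, fct] using this
    exact tendsto_nhds_unique h1 h2
  exact hTLU.congr_right hGsin


lemma logDeriv_sin_pi_mul (x : ℂ) :
    logDeriv (fun z => Complex.sin ((π : ℂ) * z)) x
      = (π : ℂ) * (Complex.cos ((π : ℂ) * x) / Complex.sin ((π : ℂ) * x)) := by
  have h : HasDerivAt (fun z : ℂ => Complex.sin ((π : ℂ) * z))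
      (Complex.cos ((π : ℂ) * x) * ((π : ℂ) * 1)) x := by
    exact (Complex.hasDerivAt_sin ((π : ℂ) * x)).comp x ((hasDerivAt_id x).const_mul ((π : ℂ)))
  rw [logDeriv_apply, h.deriv, mul_one, mul_comm, mul_div_assoc]

end CotPF

end CotPFSection

theorem cot_partial_fractions (x : ℂ) (hx : ∀ m : ℤ, x ≠ (m : ℂ)) :
    Tendsto (fun M : ℕ => ∑ m ∈ Finset.Icc (-(M : ℤ)) (M : ℤ), 1 / (x + (m : ℂ)))
      atTop (nhds ((π : ℂ) * (Complex.cos (π * x) / Complex.sin (π * x)))) := by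
  have hr : (0 : ℝ) < ‖x‖ + 1 := by positivity
  have hxs : x ∈ Metric.ball (0 : ℂ) (‖x‖ + 1) := by
    simp only [Metric.mem_ball, dist_zero_right]
    linarith
  have hsin : Complex.sin ((π : ℂ) * x) ≠ 0 := by
    rw [Complex.sin_ne_zero_iff]
    intro k h
    have hpi : ((π : ℝ) : ℂ) ≠ 0 := by exact_mod_cast Real.pi_ne_zero
    apply hx k
    have h2 : (π : ℂ) * x = (π : ℂ) * (k : ℂ) := by rw [h]; ring
    exact mul_left_cancel₀ hpi h2
  have hld := Complex.logDeriv_tendsto (f := CotPF.F) (g := fun z => Complex.sin ((π : ℂ) * z))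
    Metric.isOpen_ball hxs
    (CotPF.tlu (‖x‖ + 1) hr)
    (Eventually.of_forall fun n => (CotPF.diff_F n).differentiableOn) hsin
  rw [CotPF.logDeriv_sin_pi_mul x] at hld
  refine hld.congr fun n => ?_
  rw [CotPF.logDeriv_F hx n, CotPF.sum_Icc_eq x n]
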